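/- Consider the system in ℝ³: ẋᵢ = -xᵢ(1 - x₁² - x₂² + x₃²) for i = 1,2,3. Every point on the set {1 - x₁² - x₂² + x₃² = 0} is an equilibrium, and every solution starting at a point with 1 - x₁² - x₂² + x₃² > 0 in the connected component of that region containing the origin converges to the origin. -/

import Mathlib

open Filter Topology Real Set

lemma pos_of_logistic (h : ℝ → ℝ)
    (hh : ∀ t, HasDerivAt h (2 * h t * (1 - h t)) t) (h0 : 0 < h 0) :
    ∀ t ≥ 0, 0 < h t := by
  have hcont : Continuous h :=
    continuous_iff_continuousAt.2 fun t => (hh t).continuousAt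
  intro t ht
  by_contra hle
  push_neg at hle
  obtain ⟨T, hTmemIcc, hT0⟩ : ∃ T ∈ Icc (0:ℝ) t, h T = 0 := by
    have := intermediate_value_Icc' ht hcont.continuousOn
    obtain ⟨T, hT, hT0⟩ := this ⟨hle, h0.le⟩
    exact ⟨T, hT, hT0⟩
  obtain ⟨hT0le, hTle⟩ := hTmemIcc
  obtain ⟨C, hC⟩ := (isCompact_Icc : IsCompact (Icc (0:ℝ) T)).exists_bound_of_continuousOn
    hcont.continuousOn
  set K : ℝ := 2 * (1 + C) with hK
  have hCnn : 0 ≤ C := le_trans (norm_nonneg _) (hC 0 ⟨le_refl _, hT0le⟩)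
  have key : ∀ s ∈ Icc (0:ℝ) T, ‖h (T - s)‖ ≤ gronwallBound 0 K 0 (s - 0) := by
    apply norm_le_gronwallBound_of_norm_deriv_right_le
      (f := fun s => h (T - s))
      (f' := fun s => 2 * h (T - s) * (1 - h (T - s)) * (-1))
    · exact (hcont.comp (continuous_const.sub continuous_id)).continuousOn
    · intro s hs
      have : HasDerivAt (fun s => h (T - s)) (2 * h (T - s) * (1 - h (T - s)) * (-1)) s := by
        have := (hh (T - s)).comp s (((hasDerivAt_id s).const_sub T))
        exact this
      exact this.hasDerivWithinAt
    · simp [hT0]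
    · intro s hs
      have hmem : T - s ∈ Icc (0:ℝ) T := ⟨by linarith [hs.2], by linarith [hs.1]⟩
      have h1 : ‖h (T - s)‖ ≤ C := hC _ hmem
      have h2 : |1 - h (T - s)| ≤ 1 + C := by
        rw [Real.norm_eq_abs] at h1
        cases abs_le.1 h1 with
        | intro a b => rw [abs_le]; constructor <;> linarith
      calc ‖2 * h (T - s) * (1 - h (T - s)) * (-1)‖
          = 2 * |h (T - s)| * |1 - h (T - s)| := by
            simp [abs_mul, Real.norm_eq_abs, mul_comm, mul_assoc, mul_left_comm]
        _ ≤ 2 * |h (T - s)| * (1 + C) := by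
            apply mul_le_mul_of_nonneg_left h2 (by positivity)
        _ = K * ‖h (T - s)‖ + 0 := by rw [Real.norm_eq_abs]; ring
  have hfin := key T ⟨hT0le, le_refl _⟩
  rw [gronwallBound_ε0_δ0] at hfin
  simp at hfin
  exact absurd hfin (by positivity)

lemma const_of_motion (h y : ℝ → ℝ)
    (hh : ∀ t, HasDerivAt h (2 * h t * (1 - h t)) t)
    (hy : ∀ t, HasDerivAt y (-(y t) * h t) t)
    (hpos : ∀ t ≥ 0, 0 < h t) :
    ∀ t ≥ 0, (y t)^2 * Real.exp (2*t) / h t = (y 0)^2 / h 0 := by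
  intro t ht
  have := constant_of_has_deriv_right_zero
    (f := fun s => (y s)^2 * Real.exp (2*s) / h s) (a := 0) (b := t)
    ?_ ?_ t (right_mem_Icc.2 ht)
  · simpa using this
  · apply ContinuousOn.div
    · exact (((continuous_iff_continuousAt.2 fun s => (hy s).continuousAt).pow 2).mul
        (Real.continuous_exp.comp (continuous_const.mul continuous_id))).continuousOn
    · exact (continuous_iff_continuousAt.2 fun s => (hh s).continuousAt).continuousOn
    · exact fun s hs => (hpos s hs.1).ne'
  · intro s hs
    have hs0 : 0 < h s := hpos s hs.1
    have d1 : HasDerivAt (fun u => (y u)^2) (2 * y s ^ 1 * (-(y s) * h s)) s := by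
      have := (hy s).pow 2
      rw [show (2:ℕ)-1 = 1 from rfl, Nat.cast_ofNat] at this
      exact this
    have d2 : HasDerivAt (fun u => Real.exp (2*u)) (Real.exp (2*s) * 2) s := by
      simpa using (((hasDerivAt_id s).const_mul (2:ℝ)).exp)
    have d3 := d1.mul d2
    have d4 := d3.div (hh s) hs0.ne'
    have : HasDerivAt (fun u => (y u)^2 * Real.exp (2*u) / h u) 0 s := by
      exact d4.congr_deriv (by simp only [Pi.mul_apply]; field_simp; ring)
    exact this.hasDerivWithinAt

theorem stmt_6
    (g : (Fin 3 → ℝ) → ℝ)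
    (hg : g = fun x => 1 - (x 0) ^ 2 - (x 1) ^ 2 + (x 2) ^ 2)
    (f : (Fin 3 → ℝ) → (Fin 3 → ℝ))
    (hf : f = fun x i => -(x i) * g x) :
    (∀ x, g x = 0 → f x = 0) ∧
    (∀ x₀ ∈ connectedComponentIn {x : Fin 3 → ℝ | 0 < g x} 0,
      ∀ x : ℝ → (Fin 3 → ℝ), x 0 = x₀ → (∀ t, HasDerivAt x (f (x t)) t) →
        Tendsto x atTop (𝓝 0)) := by
  constructor
  · intro x hx
    funext i
    simp [hf, hx]
  · intro x₀ hmem x hx0 hx'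
    have hg0 : 0 < g x₀ := connectedComponentIn_subset {x : Fin 3 → ℝ | 0 < g x} 0 hmem
    set h : ℝ → ℝ := fun t => 1 - (x t 0)^2 - (x t 1)^2 + (x t 2)^2 with hdef
    have hgx : ∀ t, g (x t) = h t := by intro t; rw [hg, hdef]
    have hcoord : ∀ (i : Fin 3) t, HasDerivAt (fun u => x u i) (-(x t i) * h t) t := by
      intro i t
      have := hasDerivAt_pi.1 (hx' t) i
      rw [hf] at this
      simpa [hgx t] using this
    have hh : ∀ t, HasDerivAt h (2 * h t * (1 - h t)) t := by
      intro t
      have d : HasDerivAt (fun u => 1 - (x u 0)^2 - (x u 1)^2 + (x u 2)^2)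
          (0 - (2 * x t 0 ^ 1 * (-(x t 0) * h t)) - (2 * x t 1 ^ 1 * (-(x t 1) * h t))
            + (2 * x t 2 ^ 1 * (-(x t 2) * h t))) t :=
        (((hasDerivAt_const t (1:ℝ)).sub ((hcoord 0 t).pow 2)).sub
          ((hcoord 1 t).pow 2)).add ((hcoord 2 t).pow 2)
      have : h t = 1 - (x t 0)^2 - (x t 1)^2 + (x t 2)^2 := rfl
      rw [hdef]
      convert d using 1
      rw [this]
      ring
    have h0pos : 0 < h 0 := by rw [← hgx 0, hx0]; exact hg0
    have hpos : ∀ t ≥ 0, 0 < h t := pos_of_logistic h hh h0pos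
    have hC : ∀ (i : Fin 3), ∀ t ≥ 0,
        (x t i)^2 * Real.exp (2*t) / h t = (x 0 i)^2 / h 0 :=
      fun i => const_of_motion h (fun t => x t i) hh (fun t => hcoord i t) hpos
    have hEq : ∀ t ≥ 0, h t * (Real.exp (2*t) * h 0 + (1 - h 0)) = Real.exp (2*t) * h 0 := by
      intro t ht
      have ht' := hpos t ht
      have e0 := hC 0 t ht; have e1 := hC 1 t ht; have e2 := hC 2 t ht
      rw [div_eq_div_iff ht'.ne' h0pos.ne'] at e0 e1 e2
      have hht : h t = 1 - (x t 0)^2 - (x t 1)^2 + (x t 2)^2 := rfl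
      have hh0 : h 0 = 1 - (x 0 0)^2 - (x 0 1)^2 + (x 0 2)^2 := rfl
      rw [hht, hh0] at e0 e1 e2 ⊢
      linear_combination -e0 - e1 + e2
    have hbound : ∀ t ≥ 0, h t ≤ max 1 (h 0) := by
      intro t ht
      have ht' := hpos t ht
      have hE : (1:ℝ) ≤ Real.exp (2*t) := Real.one_le_exp (by linarith)
      have heq := hEq t ht
      have hdenom : 0 < Real.exp (2*t) * h 0 + (1 - h 0) := by
        nlinarith [mul_pos (Real.exp_pos (2*t)) h0pos]
      rcases le_total (h 0) 1 with hc | hc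
      · refine le_trans ?_ (le_max_left 1 (h 0))
        nlinarith
      · refine le_trans ?_ (le_max_right 1 (h 0))
        nlinarith [mul_nonneg (sub_nonneg.2 hE) (sub_nonneg.2 hc)]
    have hdecay : ∀ (i : Fin 3), Tendsto (fun t => x t i) atTop (𝓝 0) := by
      intro i
      set M : ℝ := max 1 (h 0) with hM
      have hMpos : 0 < M := lt_of_lt_of_le one_pos (le_max_left _ _)
      set B : ℝ := Real.sqrt ((x 0 i)^2 / h 0 * M) with hB
      have hBnn : 0 ≤ (x 0 i)^2 / h 0 * M := by positivity
      apply squeeze_zero_norm' (a := fun t => B * Real.exp (-t))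
      · filter_upwards [eventually_ge_atTop (0:ℝ)] with t ht
        have ht' := hpos t ht
        have e := hC i t ht
        rw [div_eq_div_iff ht'.ne' h0pos.ne'] at e
        have key2 : (x t i)^2 * Real.exp (2*t) * h 0 ≤ (x 0 i)^2 * M := by
          rw [e]; exact mul_le_mul_of_nonneg_left (hbound t ht) (sq_nonneg _)
        have hsq : (x t i)^2 ≤ (B * Real.exp (-t))^2 := by
          have hrhs : (B * Real.exp (-t))^2
              = (x 0 i)^2 / h 0 * M * (Real.exp (-t) * Real.exp (-t)) := by
            rw [mul_pow, Real.sq_sqrt hBnn]; ring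
          rw [hrhs, ← Real.exp_add]
          have hexp : Real.exp (-t + -t) = (Real.exp (2*t))⁻¹ := by
            rw [← Real.exp_neg]; ring_nf
          rw [hexp]
          rw [div_mul_eq_mul_div, div_mul_eq_mul_div, le_div_iff₀ h0pos,
            ← mul_le_mul_iff_of_pos_right (Real.exp_pos (2*t))]
          calc (x t i)^2 * h 0 * Real.exp (2*t) = (x t i)^2 * Real.exp (2*t) * h 0 := by ring
            _ ≤ (x 0 i)^2 * M := key2
            _ = (x 0 i)^2 * M * (Real.exp (2*t))⁻¹ * Real.exp (2*t) := by
                field_simp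
        exact abs_le_of_sq_le_sq hsq (by positivity)
      · simpa using Real.tendsto_exp_neg_atTop_nhds_zero.const_mul B
    rw [tendsto_pi_nhds]
    intro i
    simpa using hdecay i
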